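/- Let P be a closed convex cone in ℝ^d that is spanning (P − P = ℝ^d) and pointed (P ∩ (−P) = {0}). Let A ⊆ ℝ^d be a closed set with ∅ ≠ A ≠ ℝ^d and −P + A ⊆ A, and suppose that for every x ∈ ℝ^d either A + x ⊆ A or A ⊆ A + x. Then there exist a unique vector λ ∈ ℝ^d with ‖λ‖ = 1 and ⟨λ|x⟩ ≥ 0 for all x ∈ P, and a unique real number t, such that A = {y ∈ ℝ^d : ⟨λ|y⟩ ≤ t}. -/

import Mathlib

open Pointwise


private lemma icc_subset_of_midpoint {T : Set ℝ} (hT : IsClosed T) (h0 : (0:ℝ) ∈ T)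
    (h1 : (1:ℝ) ∈ T) (hmid : ∀ a ∈ T, ∀ b ∈ T, (a + b) / 2 ∈ T) :
    Set.Icc (0:ℝ) 1 ⊆ T := by
  intro t ht
  by_contra htT
  have hS1ne : (T ∩ Set.Iic t).Nonempty := ⟨0, h0, ht.1⟩
  have hS2ne : (T ∩ Set.Ici t).Nonempty := ⟨1, h1, ht.2⟩
  have hS1bdd : BddAbove (T ∩ Set.Iic t) := ⟨t, fun x hx => hx.2⟩
  have hS2bdd : BddBelow (T ∩ Set.Ici t) := ⟨t, fun x hx => hx.2⟩
  have hu : sSup (T ∩ Set.Iic t) ∈ T ∩ Set.Iic t :=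
    (hT.inter isClosed_Iic).csSup_mem hS1ne hS1bdd
  have hv : sInf (T ∩ Set.Ici t) ∈ T ∩ Set.Ici t :=
    (hT.inter isClosed_Ici).csInf_mem hS2ne hS2bdd
  set u := sSup (T ∩ Set.Iic t)
  set v := sInf (T ∩ Set.Ici t)
  have hult : u < t := lt_of_le_of_ne hu.2 (fun h => htT (h ▸ hu.1))
  have hvgt : t < v := lt_of_le_of_ne hv.2 (fun h => htT (h.symm ▸ hv.1))
  have hm : (u + v) / 2 ∈ T := hmid u hu.1 v hv.1
  rcases le_or_gt ((u + v) / 2) t with h | h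
  · have := le_csSup hS1bdd ⟨hm, h⟩
    linarith
  · have := csInf_le hS2bdd ⟨hm, le_of_lt h⟩
    linarith

/-- Let `P` be a closed convex cone in `ℝ^d` that is spanning and
pointed. Let `A ⊆ ℝ^d` be a closed set with `∅ ≠ A ≠ ℝ^d` and `-P + A ⊆ A`, and suppose
that for every `x ∈ ℝ^d` either `A + x ⊆ A` or `A ⊆ A + x`. Then there exist a unique
vector `l ∈ ℝ^d` with `‖l‖ = 1` and `⟨l|x⟩ ≥ 0` for all `x ∈ P`, and a unique real
number `t`, such that `A = {y : ⟨l|y⟩ ≤ t}`. -/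
theorem stmt_0 {d : ℕ}
    (P : Set (EuclideanSpace ℝ (Fin d)))
    (hPclosed : IsClosed P) (hPconvex : Convex ℝ P)
    (hPcone : ∀ (c : ℝ), 0 ≤ c → ∀ x ∈ P, c • x ∈ P)
    (hPspan : P - P = Set.univ)
    (hPpointed : P ∩ (-P) = {0})
    (A : Set (EuclideanSpace ℝ (Fin d)))
    (hAclosed : IsClosed A) (hAne : A.Nonempty) (hAnuniv : A ≠ Set.univ)
    (hAinv : -P + A ⊆ A)
    (hAcomp : ∀ x : EuclideanSpace ℝ (Fin d),
      ((· + x) '' A ⊆ A) ∨ (A ⊆ (· + x) '' A)) :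
    ∃! lt : EuclideanSpace ℝ (Fin d) × ℝ,
      ‖lt.1‖ = 1 ∧ (∀ x ∈ P, 0 ≤ (inner ℝ lt.1 x : ℝ)) ∧
      A = {y | (inner ℝ lt.1 y : ℝ) ≤ lt.2} := by
  classical
  -- A is closed under midpoints
  have hAmid : ∀ a ∈ A, ∀ b ∈ A, (2⁻¹ : ℝ) • (a + b) ∈ A := by
    intro a ha b hb
    rcases hAcomp ((2⁻¹ : ℝ) • (b - a)) with h | h
    · have h2 : a + (2⁻¹ : ℝ) • (b - a) ∈ A := h ⟨a, ha, rfl⟩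
      have he : a + (2⁻¹ : ℝ) • (b - a) = (2⁻¹ : ℝ) • (a + b) := by module
      rwa [he] at h2
    · obtain ⟨a', ha', he⟩ := h hb
      have : a' = (2⁻¹ : ℝ) • (a + b) := by
        have h2 : a' = b - (2⁻¹ : ℝ) • (b - a) := eq_sub_of_add_eq he
        rw [h2]; module
      rwa [this] at ha'
  -- A is convex
  have hAconv : Convex ℝ A := by
    rw [convex_iff_segment_subset]
    intro a ha b hb
    rw [segment_eq_image']
    rintro z ⟨θ, hθ, rfl⟩
    have hTcl : IsClosed {s : ℝ | a + s • (b - a) ∈ A} := by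
      have hc : Continuous fun s : ℝ => a + s • (b - a) :=
        continuous_const.add (continuous_id.smul continuous_const)
      exact hAclosed.preimage hc
    have h0 : (0:ℝ) ∈ {s : ℝ | a + s • (b - a) ∈ A} := by simpa using ha
    have h1 : (1:ℝ) ∈ {s : ℝ | a + s • (b - a) ∈ A} := by
      have : a + (1:ℝ) • (b - a) = b := by module
      simpa [Set.mem_setOf_eq, this] using hb
    have hmid : ∀ s₁ ∈ {s : ℝ | a + s • (b - a) ∈ A}, ∀ s₂ ∈ {s : ℝ | a + s • (b - a) ∈ A},
        (s₁ + s₂) / 2 ∈ {s : ℝ | a + s • (b - a) ∈ A} := by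
      intro s₁ hs₁ s₂ hs₂
      have he : a + ((s₁ + s₂) / 2) • (b - a)
          = (2⁻¹ : ℝ) • ((a + s₁ • (b - a)) + (a + s₂ • (b - a))) := by module
      simpa [Set.mem_setOf_eq, he] using hAmid _ hs₁ _ hs₂
    exact icc_subset_of_midpoint hTcl h0 h1 hmid hθ
  -- the cone of admissible translations
  set Q : Set (EuclideanSpace ℝ (Fin d)) := {x | ∀ a ∈ A, a + x ∈ A} with hQdef
  have hQ0 : (0 : EuclideanSpace ℝ (Fin d)) ∈ Q := fun a ha => by simpa using ha
  have hQclosed : IsClosed Q := by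
    have : Q = ⋂ a ∈ A, (fun x => a + x) ⁻¹' A := by
      ext x; simp [hQdef]
    rw [this]
    exact isClosed_biInter fun a _ => hAclosed.preimage (continuous_const.add continuous_id)
  have hQconv : Convex ℝ Q := by
    intro x hx y hy s t hs ht hst
    intro a ha
    have key : a + (s • x + t • y) = s • (a + x) + t • (a + y) := by
      have : s • (a + x) + t • (a + y) = (s + t) • a + (s • x + t • y) := by module
      rw [this, hst, one_smul]
    rw [key]
    exact hAconv (hx a ha) (hy a ha) hs ht hst
  have hQnsmul : ∀ (n : ℕ), ∀ q ∈ Q, n • q ∈ Q := by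
    intro n
    induction n with
    | zero => intro q _; simpa using hQ0
    | succ n ih =>
      intro q hq a ha
      have h1 : a + n • q ∈ A := ih q hq a ha
      have := hq _ h1
      rwa [succ_nsmul, ← add_assoc]
  have hQneg : ∀ x, x ∉ Q → -x ∈ Q := by
    intro x hx
    rcases hAcomp x with h | h
    · exact absurd (fun a ha => h ⟨a, ha, rfl⟩) hx
    · intro a ha
      obtain ⟨a', ha', he⟩ := h ha
      have he' : a' + x = a := he
      have hgoal : a + -x = a' := by rw [← he']; module
      rwa [hgoal]
  have hQnuniv : Q ≠ Set.univ := by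
    intro h
    apply hAnuniv
    obtain ⟨a, ha⟩ := hAne
    ext y
    simp only [Set.mem_univ, iff_true]
    have : y - a ∈ Q := h ▸ Set.mem_univ _
    have := this a ha
    rwa [add_sub_cancel] at this
  -- separate: Q = {x | ⟪l, x⟫ ≤ 0} with ‖l‖ = 1
  obtain ⟨z, hz⟩ : ∃ z, z ∉ Q := by
    by_contra h
    push_neg at h
    exact hQnuniv (Set.eq_univ_of_forall h)
  obtain ⟨f, u, hfu, huz⟩ := geometric_hahn_banach_closed_point hQconv hQclosed hz
  have hu0 : 0 < u := by simpa using hfu 0 hQ0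
  have hfQ : ∀ q ∈ Q, f q ≤ 0 := by
    intro q hq
    by_contra h
    push_neg at h
    obtain ⟨n, hn⟩ := exists_nat_gt (u / f q)
    have h1 : u < n * f q := by
      rw [div_lt_iff₀ h] at hn; linarith
    have h2 : f ((n : ℕ) • q) < u := hfu _ (hQnsmul n q hq)
    rw [map_nsmul, nsmul_eq_mul] at h2
    linarith
  obtain ⟨l, hl1, hlQ⟩ : ∃ l : EuclideanSpace ℝ (Fin d),
      ‖l‖ = 1 ∧ ∀ q ∈ Q, (inner ℝ l q : ℝ) ≤ 0 := by
    have hl₀inner : ∀ x, (inner ℝ ((InnerProductSpace.toDual ℝ _).symm f) x : ℝ) = f x :=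
      fun x => InnerProductSpace.toDual_symm_apply
    have hl₀ne : ((InnerProductSpace.toDual ℝ _).symm f
        : EuclideanSpace ℝ (Fin d)) ≠ 0 := by
      intro h
      have h2 := hl₀inner z
      rw [h, inner_zero_left] at h2
      have : f z > 0 := lt_trans hu0 huz
      linarith
    refine ⟨‖(InnerProductSpace.toDual ℝ _).symm f‖⁻¹ • (InnerProductSpace.toDual ℝ _).symm f,
      ?_, ?_⟩
    · rw [norm_smul, norm_inv, norm_norm, inv_mul_cancel₀ (norm_ne_zero_iff.mpr hl₀ne)]
    · intro q hq
      rw [real_inner_smul_left, hl₀inner]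
      exact mul_nonpos_of_nonneg_of_nonpos (by positivity) (hfQ q hq)
  have hQmem : ∀ x, (inner ℝ l x : ℝ) ≤ 0 → x ∈ Q := by
    intro x hx
    rcases lt_or_eq_of_le hx with hx | hx
    · by_contra h
      have := hlQ _ (hQneg x h)
      rw [inner_neg_right] at this
      linarith
    · -- boundary case: approximate
      have hseq : ∀ n : ℕ, x - (1 / (n + 1) : ℝ) • l ∈ Q := by
        intro n
        by_contra h
        have := hlQ _ (hQneg _ h)
        rw [inner_neg_right, inner_sub_right, real_inner_smul_right,
          real_inner_self_eq_norm_mul_norm, hl1] at this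
        have hpos : (0:ℝ) < 1 / (n + 1) := by positivity
        rw [← hx] at this
        simp only [mul_one] at this
        linarith
      have htend : Filter.Tendsto (fun n : ℕ => x - (1 / (n + 1) : ℝ) • l)
          Filter.atTop (nhds x) := by
        have h := tendsto_one_div_add_atTop_nhds_zero_nat (𝕜 := ℝ)
        have := Filter.Tendsto.smul_const h l
        simpa using (tendsto_const_nhds (x := x)).sub this
      exact hQclosed.mem_of_tendsto htend (Filter.Eventually.of_forall hseq)
  -- l is nonnegative on P
  have hlP : ∀ x ∈ P, 0 ≤ (inner ℝ l x : ℝ) := by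
    intro p hp
    have hpQ : -p ∈ Q := by
      intro a ha
      apply hAinv
      exact ⟨-p, Set.neg_mem_neg.mpr hp, a, ha, add_comm _ _⟩
    have := hlQ _ hpQ
    rw [inner_neg_right] at this
    linarith
  -- A is a lower set for l
  have hlower : ∀ a ∈ A, ∀ y, (inner ℝ l y : ℝ) ≤ (inner ℝ l a : ℝ) → y ∈ A := by
    intro a ha y hy
    have : y - a ∈ Q := by
      apply hQmem
      rw [inner_sub_right]; linarith
    have := this a ha
    rwa [add_sub_cancel] at this
  set B : Set ℝ := (fun a => (inner ℝ l a : ℝ)) '' A with hB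
  have hBne : B.Nonempty := hAne.image _
  have hBbdd : BddAbove B := by
    by_contra h
    rw [not_bddAbove_iff] at h
    apply hAnuniv
    ext y
    simp only [Set.mem_univ, iff_true]
    obtain ⟨_, ⟨a, ha, rfl⟩, hlt⟩ := h (inner ℝ l y : ℝ)
    exact hlower a ha y (le_of_lt hlt)
  set t : ℝ := sSup B with ht
  have hAeq : A = {y | (inner ℝ l y : ℝ) ≤ t} := by
    ext y
    constructor
    · intro hy
      exact le_csSup hBbdd ⟨y, hy, rfl⟩
    · intro hy
      simp only [Set.mem_setOf_eq] at hy
      rcases lt_or_eq_of_le hy with hy | hy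
      · obtain ⟨_, ⟨a, ha, rfl⟩, hlt⟩ := exists_lt_of_lt_csSup hBne hy
        exact hlower a ha y (le_of_lt hlt)
      · have hseq : ∀ n : ℕ, y - (1 / (n + 1) : ℝ) • l ∈ A := by
          intro n
          have hpos : (0:ℝ) < 1 / (n + 1) := by positivity
          have hin : (inner ℝ l (y - (1 / (n + 1) : ℝ) • l) : ℝ) < t := by
            rw [inner_sub_right, real_inner_smul_right,
              real_inner_self_eq_norm_mul_norm, hl1, hy]
            simp only [mul_one]
            linarith
          obtain ⟨_, ⟨a, ha, rfl⟩, hlt⟩ := exists_lt_of_lt_csSup hBne hin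
          exact hlower a ha _ (le_of_lt hlt)
        have htend : Filter.Tendsto (fun n : ℕ => y - (1 / (n + 1) : ℝ) • l)
            Filter.atTop (nhds y) := by
          have h := tendsto_one_div_add_atTop_nhds_zero_nat (𝕜 := ℝ)
          have := Filter.Tendsto.smul_const h l
          simpa using (tendsto_const_nhds (x := y)).sub this
        exact hAclosed.mem_of_tendsto htend (Filter.Eventually.of_forall hseq)
  -- existence and uniqueness
  refine ⟨⟨l, t⟩, ⟨hl1, hlP, hAeq⟩, ?_⟩
  rintro ⟨l', t'⟩ ⟨h1', _, h3'⟩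
  simp only at h1' h3' ⊢
  have hiff : ∀ y, (inner ℝ l' y : ℝ) ≤ t' ↔ (inner ℝ l y : ℝ) ≤ t := by
    intro y
    constructor
    · intro h
      have hy : y ∈ A := by rw [h3']; exact h
      rw [hAeq] at hy; exact hy
    · intro h
      have hy : y ∈ A := by rw [hAeq]; exact h
      rw [h3'] at hy; exact hy
  have hll : (inner ℝ l l : ℝ) = 1 := by
    rw [real_inner_self_eq_norm_mul_norm, hl1]; norm_num
  have horth : ∀ v, (inner ℝ l v : ℝ) = 0 → (inner ℝ l' v : ℝ) = 0 := by
    intro v hv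
    have hs : ∀ s : ℝ, s * (inner ℝ l' v : ℝ) ≤ t' - t * (inner ℝ l' l : ℝ) := by
      intro s
      have hy : (inner ℝ l (t • l + s • v) : ℝ) ≤ t := by
        rw [inner_add_right, real_inner_smul_right, real_inner_smul_right, hv, hll]
        simp
      have := (hiff _).mpr hy
      rw [inner_add_right, real_inner_smul_right, real_inner_smul_right] at this
      linarith
    by_contra hc
    have := hs ((t' - t * (inner ℝ l' l : ℝ) + 1) / (inner ℝ l' v : ℝ))
    rw [div_mul_cancel₀ _ hc] at this
    linarith
  have hl'v : ∀ v, (inner ℝ l' v : ℝ) = (inner ℝ l' l : ℝ) * (inner ℝ l v : ℝ) := by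
    intro v
    have h0 : (inner ℝ l (v - (inner ℝ l v : ℝ) • l) : ℝ) = 0 := by
      rw [inner_sub_right, real_inner_smul_right, hll]; ring
    have := horth _ h0
    rw [inner_sub_right, real_inner_smul_right, sub_eq_zero] at this
    rw [this]; ring
  set c : ℝ := (inner ℝ l' l : ℝ) with hc
  have hll' : l' = c • l := by
    have hz : ∀ v, (inner ℝ (l' - c • l) v : ℝ) = 0 := by
      intro v
      rw [inner_sub_left, real_inner_smul_left]
      have := hl'v v
      linarith
    have := hz (l' - c • l)
    rw [inner_self_eq_zero, sub_eq_zero] at this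
    exact this
  have habs : |c| = 1 := by
    have := congrArg norm hll'
    rw [h1', norm_smul, hl1, mul_one, Real.norm_eq_abs] at this
    exact this.symm
  have hcases := abs_eq (by norm_num : (0:ℝ) ≤ 1) |>.mp habs
  rcases hcases with hc1 | hcm1
  · -- c = 1 : l' = l, then t' = t
    have hle : l' = l := by rw [hll', hc1, one_smul]
    have ht1 : t ≤ t' := by
      have := (hiff (t • l)).mpr (by rw [real_inner_smul_right, hll]; simp)
      rw [hle, real_inner_smul_right, hll] at this
      linarith
    have ht2 : t' ≤ t := by
      have := (hiff (t' • l)).mp (by rw [hle, real_inner_smul_right, hll]; simp)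
      rw [real_inner_smul_right, hll] at this
      linarith
    exact Prod.ext hle (le_antisymm ht2 ht1)
  · -- c = -1 : contradiction
    exfalso
    have hle : l' = -l := by rw [hll', hcm1]; module
    set s : ℝ := max t (-t') + 1 with hs
    have h1 : (inner ℝ l' (s • l) : ℝ) ≤ t' := by
      rw [hle, inner_neg_left, real_inner_smul_right, hll, mul_one]
      have : -t' ≤ s := le_trans (le_max_right _ _) (by linarith [hs ▸ le_refl s])
      have hs' : -t' < s := by
        rw [hs]; have := le_max_right t (-t'); linarith
      linarith
    have := (hiff _).mp h1
    rw [real_inner_smul_right, hll, mul_one] at this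
    have : t < s := by
      rw [hs]; have := le_max_left t (-t'); linarith
    linarith [(hiff (s • l)).mp h1, real_inner_smul_right l l s]
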